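/- For positive reals a0,a1,b0,b1,c0,c1 with a1/a0 < b1/b0 < c1/c0, at least one of the following holds: (i) a0·log(a0/a1) + (b0+c0)·log((b0+c0)/(b1+c1)) > b0·log(b0/b1) + (a0+c0)·log((a0+c0)/(a1+c1)) AND a1·log(a1/a0) + (b1+c1)·log((b1+c1)/(b0+c0)) > b1·log(b1/b0) + (a1+c1)·log((a1+c1)/(a0+c0)); or (ii) the analogous pair of inequalities with the roles of a and c exchanged. -/

import Mathlib

open Real Set

/-- Two-point convex order: if masses `qx, qy` at points `x, y` have the same total mass
and mean as masses `pu, pv` at points `u, v`, and `x, y` lie inside `[u, v]` with `x`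
strictly inside, then for a strictly convex `f` the inner configuration has strictly
smaller `f`-moment. -/
lemma key_convex (f : ℝ → ℝ) (hf : StrictConvexOn ℝ (Set.Ioi (0:ℝ)) f)
    (u v x y pu pv qx qy : ℝ)
    (hu : 0 < u) (huv : u < v)
    (hux : u < x) (hxv : x < v) (huy : u ≤ y) (hyv : y ≤ v)
    (hqx : 0 < qx) (hqy : 0 < qy)
    (hmass : qx + qy = pu + pv)
    (hmean : qx * x + qy * y = pu * u + pv * v) :
    qx * f x + qy * f y < pu * f u + pv * f v := by
  have hvu : (0:ℝ) < v - u := by linarith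
  set l1 : ℝ := (v - x) / (v - u) with hl1
  set l2 : ℝ := (v - y) / (v - u) with hl2
  have hl1pos : 0 < l1 := div_pos (by linarith) hvu
  have hl1lt : l1 < 1 := (div_lt_one hvu).mpr (by linarith)
  have hl2nonneg : 0 ≤ l2 := div_nonneg (by linarith) (le_of_lt hvu)
  have hl2le : l2 ≤ 1 := (div_le_one hvu).mpr (by linarith)
  have hxeq : l1 * u + (1 - l1) * v = x := by
    rw [hl1]
    field_simp
    ring
  have hyeq : l2 * u + (1 - l2) * v = y := by
    rw [hl2]
    field_simp
    ring
  have hmemu : u ∈ Set.Ioi (0:ℝ) := hu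
  have hmemv : v ∈ Set.Ioi (0:ℝ) := lt_trans hu huv
  have hb1 : (0:ℝ) < 1 - l1 := by linarith
  have hs1 : l1 + (1 - l1) = 1 := by ring
  have hb2 : (0:ℝ) ≤ 1 - l2 := by linarith
  have hs2 : l2 + (1 - l2) = 1 := by ring
  have h1 : f x < l1 * f u + (1 - l1) * f v := by
    have := hf.2 hmemu hmemv (ne_of_lt huv) hl1pos hb1 hs1
    rw [smul_eq_mul, smul_eq_mul, smul_eq_mul, smul_eq_mul, hxeq] at this
    exact this
  have h2 : f y ≤ l2 * f u + (1 - l2) * f v := by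
    have := hf.convexOn.2 hmemu hmemv hl2nonneg hb2 hs2
    rw [smul_eq_mul, smul_eq_mul, smul_eq_mul, smul_eq_mul, hyeq] at this
    exact this
  have hc1 : qx * l1 + qy * l2 = pu := by
    rw [hl1, hl2]
    field_simp
    linear_combination v * hmass - hmean
  have hc2 : qx * (1 - l1) + qy * (1 - l2) = pv := by
    have : qx * l1 + qy * l2 + (qx * (1 - l1) + qy * (1 - l2)) = qx + qy := by ring
    linarith [hmass]
  have step1 : qx * f x < qx * (l1 * f u + (1 - l1) * f v) :=
    (mul_lt_mul_iff_right₀ hqx).mpr h1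
  have step2 : qy * f y ≤ qy * (l2 * f u + (1 - l2) * f v) :=
    (mul_le_mul_iff_right₀ hqy).mpr h2
  have hsum : qx * (l1 * f u + (1 - l1) * f v) + qy * (l2 * f u + (1 - l2) * f v)
      = pu * f u + pv * f v := by
    linear_combination (f u) * hc1 + (f v) * hc2
  linarith

/-- Mediant inequality. -/
lemma mediant_lt (x0 x1 y0 y1 : ℝ) (hx0 : 0 < x0) (hy0 : 0 < y0)
    (h : x1 / x0 < y1 / y0) :
    x1 / x0 < (x1 + y1) / (x0 + y0) ∧ (x1 + y1) / (x0 + y0) < y1 / y0 := by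
  rw [div_lt_div_iff₀ hx0 hy0] at h
  constructor
  · rw [div_lt_div_iff₀ hx0 (by linarith)]; nlinarith
  · rw [div_lt_div_iff₀ (by linarith) hy0]; nlinarith

theorem stmt_0 (a0 a1 b0 b1 c0 c1 : ℝ)
    (ha0 : 0 < a0) (ha1 : 0 < a1) (hb0 : 0 < b0) (hb1 : 0 < b1)
    (hc0 : 0 < c0) (hc1 : 0 < c1)
    (hab : a1 / a0 < b1 / b0) (hbc : b1 / b0 < c1 / c0) :
    (a0 * Real.log (a0 / a1) + (b0 + c0) * Real.log ((b0 + c0) / (b1 + c1)) >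
       b0 * Real.log (b0 / b1) + (a0 + c0) * Real.log ((a0 + c0) / (a1 + c1)) ∧
     a1 * Real.log (a1 / a0) + (b1 + c1) * Real.log ((b1 + c1) / (b0 + c0)) >
       b1 * Real.log (b1 / b0) + (a1 + c1) * Real.log ((a1 + c1) / (a0 + c0))) ∨
    (c0 * Real.log (c0 / c1) + (a0 + b0) * Real.log ((a0 + b0) / (a1 + b1)) >
       b0 * Real.log (b0 / b1) + (a0 + c0) * Real.log ((a0 + c0) / (a1 + c1)) ∧
     c1 * Real.log (c1 / c0) + (a1 + b1) * Real.log ((a1 + b1) / (a0 + b0)) >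
       b1 * Real.log (b1 / b0) + (a1 + c1) * Real.log ((a1 + c1) / (a0 + c0))) := by
  have hf0 : StrictConvexOn ℝ (Set.Ioi (0:ℝ)) (fun t => -Real.log t) :=
    strictConcaveOn_log_Ioi.neg
  have hf1 : StrictConvexOn ℝ (Set.Ioi (0:ℝ)) (fun t => t * Real.log t) :=
    Real.strictConvexOn_mul_log.subset Set.Ioi_subset_Ici_self (convex_Ioi 0)
  have hac : a1 / a0 < c1 / c0 := hab.trans hbc
  have mab := mediant_lt a0 a1 b0 b1 ha0 hb0 hab
  have mbc := mediant_lt b0 b1 c0 c1 hb0 hc0 hbc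
  have mac := mediant_lt a0 a1 c0 c1 ha0 hc0 hac
  -- product identities
  have ea : a0 * (a1 / a0) = a1 := by field_simp
  have eb : b0 * (b1 / b0) = b1 := by field_simp
  have ec : c0 * (c1 / c0) = c1 := by field_simp
  have eab : (a0 + b0) * ((a1 + b1) / (a0 + b0)) = a1 + b1 := by
    field_simp
  have eac : (a0 + c0) * ((a1 + c1) / (a0 + c0)) = a1 + c1 := by
    field_simp
  have ebc : (b0 + c0) * ((b1 + c1) / (b0 + c0)) = b1 + c1 := by
    field_simp
  -- log flipping identities
  have la : Real.log (a0 / a1) = -Real.log (a1 / a0) := by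
    rw [← Real.log_inv, inv_div]
  have lb : Real.log (b0 / b1) = -Real.log (b1 / b0) := by
    rw [← Real.log_inv, inv_div]
  have lc : Real.log (c0 / c1) = -Real.log (c1 / c0) := by
    rw [← Real.log_inv, inv_div]
  have lab : Real.log ((a0 + b0) / (a1 + b1)) = -Real.log ((a1 + b1) / (a0 + b0)) := by
    rw [← Real.log_inv, inv_div]
  have lac : Real.log ((a0 + c0) / (a1 + c1)) = -Real.log ((a1 + c1) / (a0 + c0)) := by
    rw [← Real.log_inv, inv_div]
  have lbc : Real.log ((b0 + c0) / (b1 + c1)) = -Real.log ((b1 + c1) / (b0 + c0)) := by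
    rw [← Real.log_inv, inv_div]
  by_cases hcase : (a1 + c1) / (a0 + c0) ≤ (b1 + c1) / (b0 + c0)
  · -- left branch: merge (b,c) beats merge (a,c), from side a
    left
    have hmean : b0 * (b1 / b0) + (a0 + c0) * ((a1 + c1) / (a0 + c0)) =
        a0 * (a1 / a0) + (b0 + c0) * ((b1 + c1) / (b0 + c0)) := by
      rw [eb, eac, ea, ebc]; ring
    have H0 : b0 * -Real.log (b1 / b0) +
          (a0 + c0) * -Real.log ((a1 + c1) / (a0 + c0)) <
        a0 * -Real.log (a1 / a0) +
          (b0 + c0) * -Real.log ((b1 + c1) / (b0 + c0)) :=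
      key_convex (fun t => -Real.log t) hf0
        (a1 / a0) ((b1 + c1) / (b0 + c0)) (b1 / b0) ((a1 + c1) / (a0 + c0))
        a0 (b0 + c0) b0 (a0 + c0)
        (div_pos ha1 ha0) (hab.trans mbc.1) hab mbc.1 mac.1.le hcase
        hb0 (by linarith) (by ring) hmean
    have H1 : b0 * (b1 / b0 * Real.log (b1 / b0)) +
          (a0 + c0) * ((a1 + c1) / (a0 + c0) * Real.log ((a1 + c1) / (a0 + c0))) <
        a0 * (a1 / a0 * Real.log (a1 / a0)) +
          (b0 + c0) * ((b1 + c1) / (b0 + c0) * Real.log ((b1 + c1) / (b0 + c0))) :=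
      key_convex (fun t => t * Real.log t) hf1
        (a1 / a0) ((b1 + c1) / (b0 + c0)) (b1 / b0) ((a1 + c1) / (a0 + c0))
        a0 (b0 + c0) b0 (a0 + c0)
        (div_pos ha1 ha0) (hab.trans mbc.1) hab mbc.1 mac.1.le hcase
        hb0 (by linarith) (by ring) hmean
    rw [← mul_assoc, ← mul_assoc, ← mul_assoc, ← mul_assoc,
      eb, eac, ea, ebc] at H1
    constructor
    · rw [la, lb, lac, lbc]; linarith
    · linarith
  · -- right branch: from side c
    right
    push_neg at hcase
    have hmean : b0 * (b1 / b0) + (a0 + c0) * ((a1 + c1) / (a0 + c0)) =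
        (a0 + b0) * ((a1 + b1) / (a0 + b0)) + c0 * (c1 / c0) := by
      rw [eb, eac, eab, ec]; ring
    have huy : (a1 + b1) / (a0 + b0) ≤ (a1 + c1) / (a0 + c0) :=
      le_of_lt (lt_trans (lt_trans mab.2 mbc.1) hcase)
    have H0 : b0 * -Real.log (b1 / b0) +
          (a0 + c0) * -Real.log ((a1 + c1) / (a0 + c0)) <
        (a0 + b0) * -Real.log ((a1 + b1) / (a0 + b0)) +
          c0 * -Real.log (c1 / c0) :=
      key_convex (fun t => -Real.log t) hf0
        ((a1 + b1) / (a0 + b0)) (c1 / c0) (b1 / b0) ((a1 + c1) / (a0 + c0))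
        (a0 + b0) c0 b0 (a0 + c0)
        (div_pos (by linarith) (by linarith)) (mab.2.trans hbc) mab.2 hbc
        huy mac.2.le hb0 (by linarith) (by ring) hmean
    have H1 : b0 * (b1 / b0 * Real.log (b1 / b0)) +
          (a0 + c0) * ((a1 + c1) / (a0 + c0) * Real.log ((a1 + c1) / (a0 + c0))) <
        (a0 + b0) * ((a1 + b1) / (a0 + b0) * Real.log ((a1 + b1) / (a0 + b0))) +
          c0 * (c1 / c0 * Real.log (c1 / c0)) :=
      key_convex (fun t => t * Real.log t) hf1
        ((a1 + b1) / (a0 + b0)) (c1 / c0) (b1 / b0) ((a1 + c1) / (a0 + c0))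
        (a0 + b0) c0 b0 (a0 + c0)
        (div_pos (by linarith) (by linarith)) (mab.2.trans hbc) mab.2 hbc
        huy mac.2.le hb0 (by linarith) (by ring) hmean
    rw [← mul_assoc, ← mul_assoc, ← mul_assoc, ← mul_assoc,
      eb, eac, eab, ec] at H1
    constructor
    · rw [lb, lc, lab, lac]; linarith
    · linarith
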